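/- Let V be a word with k distinct letters, each occurring at least r ≥ 2 times in V, let q ≥ 2 be an integer, and let W_n be a uniformly random q-ary word of length n. Then for every nondecreasing function f : ℕ → (0,∞) there exists N such that for all n ≥ N: P( binom(n+1,2)·δ(V,W_n) > n·f(n) ) < n^{k+3} · q^{f(n)(1−r)/r}. -/

import Mathlib

open Filter

/-- `U` is an instance of `V`: image of `V` under a nonerasing substitution. -/
def IsInstance {Γ β : Type*} (V : List Γ) (U : List β) : Prop :=
  ∃ φ : Γ → List β, (∀ x ∈ V, φ x ≠ []) ∧ U = (V.map φ).flatten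

/-- `W` encounters `V`: some factor of `W` is an instance of `V`. -/
def Encounters {Γ β : Type*} (V : List Γ) (W : List β) : Prop :=
  ∃ U : List β, U <:+: W ∧ IsInstance V U

/-- Zimin words over alphabet ℕ. -/
def Zimin : ℕ → List ℕ
  | 0 => []
  | n + 1 => Zimin n ++ [n] ++ Zimin n

/-- Least M such that every q-ary word of length M encounters Z_n. -/
noncomputable def fZ (n q : ℕ) : ℕ :=
  sInf {M | ∀ W : List (Fin q), W.length = M → Encounters (Zimin n) W}

/-- Exponential tower with b copies of a. -/
def tower (a : ℕ) : ℕ → ℕ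
  | 0 => 1
  | b + 1 => a ^ tower a b

/-- Number of length-M q-ary words that are instances of V. -/
noncomputable def instCount (V : List ℕ) (q M : ℕ) : ℕ :=
  Nat.card {W : Fin M → Fin q // IsInstance V (List.ofFn W)}

/-- Factor density d(V,W). -/
noncomputable def factorDensity {α : Type*} [DecidableEq α] (V W : List α) : ℝ :=
  (((((Finset.range (W.length + 1)) ×ˢ (Finset.range (W.length + 1))).filter
      (fun p => p.1 < p.2 ∧ (W.drop p.1).take (p.2 - p.1) = V)).card : ℝ)) /
    ((W.length : ℝ) + 1 - (V.length : ℝ))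

/-- Number of substrings of W (given by position pairs) that are V-instances. -/
noncomputable def instSubCount {Γ β : Type*} (V : List Γ) (W : List β) : ℕ :=
  Nat.card {p : ℕ × ℕ //
    p.1 < p.2 ∧ p.2 ≤ W.length ∧ IsInstance V ((W.drop p.1).take (p.2 - p.1))}

/-- Instance density δ(V,W). -/
noncomputable def instDensity {Γ β : Type*} (V : List Γ) (W : List β) : ℝ :=
  (instSubCount V W : ℝ) / ((W.length + 1).choose 2 : ℝ)

/-- q-liminf density of V. -/
noncomputable def liminfDensity {Γ : Type*} (V : List Γ) (q : ℕ) : ℝ :=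
  Filter.liminf (fun W : List (Fin q) => instDensity V W) (Filter.comap List.length Filter.atTop)

/-- Expected instance density of V in a uniformly random q-ary word of length n. -/
noncomputable def expDensity {Γ : Type*} (V : List Γ) (q n : ℕ) : ℝ :=
  (∑ W : Fin n → Fin q, instDensity V (List.ofFn W)) / (q : ℝ) ^ n

/-- Variance of the instance density of V in a uniformly random q-ary word of length n. -/
noncomputable def varDensity {Γ : Type*} (V : List Γ) (q n : ℕ) : ℝ :=
  (∑ W : Fin n → Fin q, (instDensity V (List.ofFn W) - expDensity V q n) ^ 2) / (q : ℝ) ^ n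

/-- Probability that a uniformly random q-ary word of length n is a V-instance. -/
noncomputable def instProb {Γ : Type*} (V : List Γ) (q n : ℕ) : ℝ :=
  (Nat.card {W : Fin n → Fin q // IsInstance V (List.ofFn W)} : ℝ) / (q : ℝ) ^ n

/-- V is doubled: every letter occurring in V occurs at least twice. -/
def Doubled {Γ : Type*} [DecidableEq Γ] (V : List Γ) : Prop :=
  ∀ x ∈ V, 2 ≤ V.count x

/-- Number of letter recurrences ‖V‖ = |V| - |L(V)|. -/
def recurCount {Γ : Type*} [DecidableEq Γ] (V : List Γ) : ℕ :=
  V.length - V.dedup.length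

lemma flatten_inj {β : Type*} : ∀ {L₁ L₂ : List (List β)},
    L₁.map List.length = L₂.map List.length → L₁.flatten = L₂.flatten → L₁ = L₂
  | [], [], _, _ => rfl
  | [], _ :: _, hlen, _ => by simp at hlen
  | _ :: _, [], hlen, _ => by simp at hlen
  | a :: L₁, b :: L₂, hlen, hfl => by
    simp only [List.map_cons, List.cons.injEq] at hlen
    simp only [List.flatten_cons] at hfl
    obtain ⟨hab, hL⟩ := List.append_inj hfl hlen.1
    rw [hab, flatten_inj hlen.2 hL]

open Classical in
lemma unionBound {α ι : Type*} [Fintype α] (s : Finset ι) (P : α → Prop) (Q : ι → α → Prop)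
    (h : ∀ a, P a → ∃ x ∈ s, Q x a) :
    Nat.card {a // P a} ≤ ∑ x ∈ s, Nat.card {a // Q x a} := by
  classical
  simp only [Nat.card_eq_fintype_card, Fintype.card_subtype]
  calc (Finset.univ.filter P).card
      ≤ (s.biUnion (fun x => Finset.univ.filter (Q x))).card := by
        apply Finset.card_le_card
        intro a ha
        simp only [Finset.mem_filter, Finset.mem_univ, true_and] at ha
        simp only [Finset.mem_biUnion, Finset.mem_filter, Finset.mem_univ, true_and]
        exact h a ha
    _ ≤ _ := Finset.card_biUnion_le

lemma div_mono_aux (r : ℕ) (hr : 1 ≤ r) (a b : ℕ) (hab : a ≤ b) :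
    b / r + a ≤ a / r + b := by
  induction b, hab using Nat.le_induction with
  | base => omega
  | succ b hb ih =>
    have h1 : (b + 1) / r ≤ b / r + 1 := by
      calc (b+1)/r ≤ (b+r)/r := Nat.div_le_div_right (by omega)
        _ = b/r + 1 := Nat.add_div_right b hr
    omega

lemma instCount_le {Γ : Type*} [DecidableEq Γ] (V : List Γ)
    (r : ℕ) (hr : 1 ≤ r) (hmult : ∀ x ∈ V, r ≤ V.count x)
    (q m : ℕ) (hq : 1 ≤ q) :
    Nat.card {U : Fin m → Fin q // IsInstance V (List.ofFn U)} ≤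
      (m + 1) ^ V.dedup.length * q ^ (m / r) := by
  classical
  let z : Fin q := ⟨0, hq⟩
  let φf : {U : Fin m → Fin q // IsInstance V (List.ofFn U)} → Γ → List (Fin q) :=
    fun u => u.2.choose
  have hφ : ∀ u, (∀ x ∈ V, φf u x ≠ []) ∧ List.ofFn u.1 = (V.map (φf u)).flatten :=
    fun u => u.2.choose_spec
  let gf : {U : Fin m → Fin q // IsInstance V (List.ofFn U)} →
      Fin V.dedup.length → List (Fin q) := fun u i => φf u (V.dedup[(i : ℕ)])
  have hm : ∀ u, m = ∑ x ∈ V.toFinset, V.count x * (φf u x).length := by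
    intro u
    calc m = ((V.map (φf u)).flatten).length := by rw [← (hφ u).2, List.length_ofFn]
      _ = (V.map fun x => (φf u x).length).sum := by
          simp [List.length_flatten, List.map_map, Function.comp_def]
      _ = ∑ x ∈ V.toFinset, V.count x * (φf u x).length := by
          rw [Finset.sum_list_map_count]; simp [smul_eq_mul]
  have hsum_fin : ∀ u, ∑ i, (gf u i).length = ∑ x ∈ V.toFinset, (φf u x).length := by
    intro u
    rw [← List.sum_ofFn]
    have h2 : List.ofFn (fun i => (gf u i).length) =
        V.dedup.map (fun x => (φf u x).length) := by
      conv_rhs => rw [← List.ofFn_getElem (xs := V.dedup), List.map_ofFn]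
      rfl
    rw [h2, Finset.sum_list_map_count]
    have ht : V.dedup.toFinset = V.toFinset := by ext a; simp [List.mem_dedup]
    rw [ht]
    refine Finset.sum_congr rfl fun x hx => ?_
    rw [List.count_dedup]
    simp [List.mem_toFinset.1 hx]
  have hrs : ∀ u, r * ∑ i, (gf u i).length ≤ m := by
    intro u
    rw [hsum_fin u, Finset.mul_sum, hm u]
    exact Finset.sum_le_sum fun x hx =>
      Nat.mul_le_mul_right _ (hmult x (List.mem_toFinset.1 hx))
  have hsM : ∀ u, ∑ i, (gf u i).length ≤ m / r := fun u =>
    (Nat.le_div_iff_mul_le (by omega)).2 (by rw [mul_comm]; exact hrs u)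
  have hgle : ∀ u i, (gf u i).length ≤ m := fun u i =>
    le_trans (Finset.single_le_sum (f := fun i => (gf u i).length)
      (fun _ _ => Nat.zero_le _) (Finset.mem_univ i))
      (le_trans (hsM u) (Nat.div_le_self m r))
  let Cf := fun u => (List.ofFn (gf u)).flatten
  have hClen : ∀ u, (Cf u).length = ∑ i, (gf u i).length := by
    intro u
    simp [Cf, List.length_flatten, List.map_ofFn, List.sum_ofFn, Function.comp]
  let E : {U : Fin m → Fin q // IsInstance V (List.ofFn U)} →
      (Fin V.dedup.length → Fin (m + 1)) × (Fin (m / r) → Fin q) :=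
    fun u => (fun i => ⟨(gf u i).length, Nat.lt_succ_of_le (hgle u i)⟩,
              fun j => (Cf u).getD j z)
  have hinj : Function.Injective E := by
    intro u₁ u₂ hE
    have h1 : ∀ i, (gf u₁ i).length = (gf u₂ i).length := by
      intro i
      exact congrArg Fin.val (congrFun (congrArg Prod.fst hE) i)
    have hClen2 : (Cf u₁).length = (Cf u₂).length := by
      rw [hClen, hClen]; exact Finset.sum_congr rfl fun i _ => h1 i
    have hCeq : Cf u₁ = Cf u₂ := by
      apply List.ext_getElem hClen2
      intro j hj hj'
      have hjM : j < m / r := lt_of_lt_of_le (hClen u₁ ▸ hj) (hsM u₁)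
      have h3 : (Cf u₁).getD j z = (Cf u₂).getD j z :=
        congrFun (congrArg Prod.snd hE) ⟨j, hjM⟩
      rwa [List.getD_eq_getElem _ _ hj, List.getD_eq_getElem _ _ hj'] at h3
    have hg : gf u₁ = gf u₂ := by
      apply List.ofFn_injective
      apply flatten_inj _ hCeq
      rw [List.map_ofFn, List.map_ofFn]
      exact congrArg List.ofFn (funext fun i => h1 i)
    have hφV : ∀ x ∈ V, φf u₁ x = φf u₂ x := by
      intro x hx
      have hxd : x ∈ V.dedup := List.mem_dedup.2 hx
      have hilt : V.dedup.idxOf x < V.dedup.length := List.idxOf_lt_length_iff.2 hxd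
      have e1 : gf u₁ ⟨V.dedup.idxOf x, hilt⟩ = φf u₁ x := by
        show φf u₁ (V.dedup[V.dedup.idxOf x]) = φf u₁ x
        rw [List.getElem_idxOf hilt]
      have e2 : gf u₂ ⟨V.dedup.idxOf x, hilt⟩ = φf u₂ x := by
        show φf u₂ (V.dedup[V.dedup.idxOf x]) = φf u₂ x
        rw [List.getElem_idxOf hilt]
      rw [← e1, ← e2, hg]
    have hfn : List.ofFn u₁.1 = List.ofFn u₂.1 := by
      rw [(hφ u₁).2, (hφ u₂).2, List.map_congr_left hφV]
    exact Subtype.ext (List.ofFn_injective hfn)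
  calc Nat.card {U : Fin m → Fin q // IsInstance V (List.ofFn U)}
      ≤ Nat.card ((Fin V.dedup.length → Fin (m + 1)) × (Fin (m / r) → Fin q)) :=
        Nat.card_le_card_of_injective E hinj
    _ = (m + 1) ^ V.dedup.length * q ^ (m / r) := by
        rw [Nat.card_prod, Nat.card_fun, Nat.card_fun]
        simp [Nat.card_eq_fintype_card]

lemma ofFn_drop_take {β : Type*} {n : ℕ} (i m : ℕ) (W : Fin n → β) (him : i + m ≤ n) :
    ((List.ofFn W).drop i).take m = List.ofFn (fun t : Fin m => W ⟨i + t, by omega⟩) := by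
  apply List.ext_getElem
  · simp; omega
  · intro j hj hj'
    simp [List.getElem_take, List.getElem_drop, List.getElem_ofFn]

lemma factorCount_le {Γ : Type*} (V : List Γ) (q n i m : ℕ) (him : i + m ≤ n) :
    Nat.card {W : Fin n → Fin q // IsInstance V (((List.ofFn W).drop i).take m)} ≤
      Nat.card {U : Fin m → Fin q // IsInstance V (List.ofFn U)} * q ^ (n - m) := by
  classical
  let E : {W : Fin n → Fin q // IsInstance V (((List.ofFn W).drop i).take m)} →
      {U : Fin m → Fin q // IsInstance V (List.ofFn U)} × (Fin (n - m) → Fin q) :=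
    fun W => (⟨fun t => W.1 ⟨i + t, by omega⟩, by
        have h := W.2; rwa [ofFn_drop_take i m W.1 him] at h⟩,
      fun t => W.1 ⟨if (t : ℕ) < i then (t : ℕ) else (t : ℕ) + m, by
        have := t.isLt; split_ifs <;> omega⟩)
  have hinj : Function.Injective E := by
    intro W₁ W₂ hE
    have hc1 : ∀ (j : ℕ) (hj : j < m),
        W₁.1 ⟨i + j, by omega⟩ = W₂.1 ⟨i + j, by omega⟩ := fun j hj =>
      congrFun (congrArg Subtype.val (congrArg Prod.fst hE)) ⟨j, hj⟩
    have hc2 : ∀ (j : ℕ) (hj : j < n - m),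
        W₁.1 ⟨if j < i then j else j + m, by split_ifs <;> omega⟩ =
        W₂.1 ⟨if j < i then j else j + m, by split_ifs <;> omega⟩ := fun j hj =>
      congrFun (congrArg Prod.snd hE) ⟨j, hj⟩
    apply Subtype.ext; funext p
    rcases lt_or_ge (p : ℕ) i with hp | hp
    · have h := hc2 (p : ℕ) (by omega)
      convert h using 2 <;> exact Fin.ext (by simp only; split_ifs <;> omega)
    · rcases lt_or_ge (p : ℕ) (i + m) with hp2 | hp2
      · have h := hc1 ((p : ℕ) - i) (by omega)
        convert h using 2 <;> exact Fin.ext (by simp only; omega)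
      · have h := hc2 ((p : ℕ) - m) (by omega)
        convert h using 2 <;> exact Fin.ext (by simp only; split_ifs <;> omega)
  calc Nat.card {W : Fin n → Fin q // IsInstance V (((List.ofFn W).drop i).take m)}
      ≤ Nat.card ({U : Fin m → Fin q // IsInstance V (List.ofFn U)} × (Fin (n - m) → Fin q)) :=
        Nat.card_le_card_of_injective E hinj
    _ = _ := by rw [Nat.card_prod, Nat.card_fun]; simp [Nat.card_eq_fintype_card]

lemma exists_long {Γ β : Type*} (V : List Γ) (L : List β) (c : ℝ) (hc : 0 ≤ c)
    (h : (L.length : ℝ) * c < Nat.card {p : ℕ × ℕ //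
      p.1 < p.2 ∧ p.2 ≤ L.length ∧ IsInstance V ((L.drop p.1).take (p.2 - p.1))}) :
    ∃ p : ℕ × ℕ, p.1 < p.2 ∧ p.2 ≤ L.length ∧ c < ((p.2 - p.1 : ℕ) : ℝ) ∧
      IsInstance V ((L.drop p.1).take (p.2 - p.1)) := by
  by_contra hcon
  push_neg at hcon
  set n := L.length with hn
  set F := Nat.floor c with hF
  have hbnd : ∀ s : {p : ℕ × ℕ //
      p.1 < p.2 ∧ p.2 ≤ n ∧ IsInstance V ((L.drop p.1).take (p.2 - p.1))},
      s.1.2 - s.1.1 ≤ F := by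
    intro s
    apply Nat.le_floor
    by_contra hgt
    push_neg at hgt
    exact hcon s.1 s.2.1 s.2.2.1 hgt s.2.2.2
  have key : Nat.card {p : ℕ × ℕ //
      p.1 < p.2 ∧ p.2 ≤ n ∧ IsInstance V ((L.drop p.1).take (p.2 - p.1))} ≤ n * F := by
    have hle := Nat.card_le_card_of_injective
      (β := Fin n × Fin F)
      (fun s : {p : ℕ × ℕ //
          p.1 < p.2 ∧ p.2 ≤ n ∧ IsInstance V ((L.drop p.1).take (p.2 - p.1))} =>
        ((⟨s.1.1, by have := s.2.1; have := s.2.2.1; omega⟩ : Fin n),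
         (⟨s.1.2 - s.1.1 - 1, by have := hbnd s; have := s.2.1; omega⟩ : Fin F)))
      (by
        intro s₁ s₂ hs
        have e1 : s₁.1.1 = s₂.1.1 := congrArg Fin.val (congrArg Prod.fst hs)
        have e2 : s₁.1.2 - s₁.1.1 - 1 = s₂.1.2 - s₂.1.1 - 1 :=
          congrArg Fin.val (congrArg Prod.snd hs)
        have := s₁.2.1; have := s₂.2.1
        exact Subtype.ext (Prod.ext e1 (by omega)))
    calc Nat.card _ ≤ Nat.card (Fin n × Fin F) := hle
      _ = n * F := by rw [Nat.card_prod]; simp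
  have h2 : ((n * F : ℕ) : ℝ) ≤ (n : ℝ) * c := by
    push_cast
    have hFc : (F : ℝ) ≤ c := Nat.floor_le hc
    nlinarith [Nat.cast_nonneg (α := ℝ) n]
  exact lt_irrefl _ (h.trans_le (le_trans (Nat.cast_le.2 key) h2))


theorem stmt16 {Γ : Type*} [DecidableEq Γ] (V : List Γ) (hV : V ≠ [])
    (k r : ℕ) (hr : 2 ≤ r) (hcard : V.dedup.length = k)
    (hmult : ∀ x ∈ V, r ≤ V.count x)
    (q : ℕ) (hq : 2 ≤ q)
    (f : ℕ → ℝ) (hfpos : ∀ n, 0 < f n) (hfmono : Monotone f) :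
    ∃ N : ℕ, ∀ n : ℕ, N ≤ n →
      (Nat.card {W : Fin n → Fin q //
          (n : ℝ) * f n < (instSubCount V (List.ofFn W) : ℝ)} : ℝ) / (q : ℝ) ^ n <
        (n : ℝ) ^ (k + 3) * (q : ℝ) ^ (f n * (1 - (r : ℝ)) / r) := by
  classical
  subst hcard
  set k := V.dedup.length with hk
  refine ⟨2 ^ (k + 2) + 1, fun n hn => ?_⟩
  have hn1 : 1 ≤ n := le_trans (Nat.le_add_left 1 _) hn
  have hq0 : (0 : ℝ) < q := by exact_mod_cast (by omega : 0 < q)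
  have hq1 : (1 : ℝ) ≤ q := by exact_mod_cast (by omega : 1 ≤ q)
  set F := Nat.floor (f n) with hF
  set m₀ := F + 1 with hm₀
  have hrpow_pos : 0 < (q : ℝ) ^ (f n * (1 - (r : ℝ)) / r) := Real.rpow_pos_of_pos hq0 _
  have hRHS_pos : 0 < (n : ℝ) ^ (k + 3) * (q : ℝ) ^ (f n * (1 - (r : ℝ)) / r) := by
    apply mul_pos _ hrpow_pos
    have : (0 : ℝ) < n := by exact_mod_cast hn1
    positivity
  -- translate the event via exists_long
  have hlong : ∀ W : Fin n → Fin q,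
      (n : ℝ) * f n < (instSubCount V (List.ofFn W) : ℝ) →
      ∃ p : ℕ × ℕ, p.1 < p.2 ∧ p.2 ≤ n ∧ f n < ((p.2 - p.1 : ℕ) : ℝ) ∧
        IsInstance V (((List.ofFn W).drop p.1).take (p.2 - p.1)) := by
    intro W hW
    have hW' : ((List.ofFn W).length : ℝ) * f n < Nat.card {p : ℕ × ℕ //
        p.1 < p.2 ∧ p.2 ≤ (List.ofFn W).length ∧
        IsInstance V (((List.ofFn W).drop p.1).take (p.2 - p.1))} := by
      simp only [instSubCount] at hW
      simpa only [List.length_ofFn] using hW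
    obtain ⟨p, hp1, hp2, hp3, hp4⟩ :=
      exists_long V (List.ofFn W) (f n) (le_of_lt (hfpos n)) hW'
    exact ⟨p, hp1, by simpa using hp2, hp3, hp4⟩
  by_cases hcase : m₀ ≤ n
  · -- nontrivial case
    set S := ((Finset.range (n + 1)) ×ˢ (Finset.range (n + 1))).filter
      (fun p => p.1 < p.2 ∧ F < p.2 - p.1) with hS
    have hUB : Nat.card {W : Fin n → Fin q //
          (n : ℝ) * f n < (instSubCount V (List.ofFn W) : ℝ)} ≤
        ∑ p ∈ S, Nat.card {W : Fin n → Fin q //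
          IsInstance V (((List.ofFn W).drop p.1).take (p.2 - p.1))} := by
      apply unionBound
      intro W hW
      obtain ⟨p, hp1, hp2, hp3, hp4⟩ := hlong W hW
      refine ⟨p, ?_, hp4⟩
      simp only [hS, Finset.mem_filter, Finset.mem_product, Finset.mem_range]
      refine ⟨⟨by omega, by omega⟩, hp1, ?_⟩
      exact (Nat.floor_lt (le_of_lt (hfpos n))).2 hp3
    have hterm : ∀ p ∈ S, Nat.card {W : Fin n → Fin q //
        IsInstance V (((List.ofFn W).drop p.1).take (p.2 - p.1))} ≤
        (n + 1) ^ k * q ^ (n - m₀ + m₀ / r) := by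
      intro p hp
      simp only [hS, Finset.mem_filter, Finset.mem_product, Finset.mem_range] at hp
      obtain ⟨⟨hp1, hp2⟩, hp3, hp4⟩ := hp
      set m := p.2 - p.1 with hm
      have him : p.1 + m ≤ n := by omega
      calc Nat.card {W : Fin n → Fin q //
            IsInstance V (((List.ofFn W).drop p.1).take m)}
          ≤ Nat.card {U : Fin m → Fin q // IsInstance V (List.ofFn U)} * q ^ (n - m) :=
            factorCount_le V q n p.1 m him
        _ ≤ ((m + 1) ^ k * q ^ (m / r)) * q ^ (n - m) :=
            Nat.mul_le_mul_right _ (instCount_le V r (by omega) hmult q m (by omega))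
        _ = (m + 1) ^ k * q ^ (m / r + (n - m)) := by rw [mul_assoc, ← pow_add]
        _ ≤ (n + 1) ^ k * q ^ (n - m₀ + m₀ / r) := by
            apply Nat.mul_le_mul
            · exact Nat.pow_le_pow_left (by omega) k
            · apply Nat.pow_le_pow_right (by omega)
              have hd := div_mono_aux r (by omega) m₀ m (by omega)
              omega
    have hsum : (Nat.card {W : Fin n → Fin q //
          (n : ℝ) * f n < (instSubCount V (List.ofFn W) : ℝ)}) ≤
        (n + 1) ^ 2 * ((n + 1) ^ k * q ^ (n - m₀ + m₀ / r)) := by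
      refine le_trans hUB (le_trans (Finset.sum_le_card_nsmul S _ _ hterm) ?_)
      rw [smul_eq_mul]
      apply Nat.mul_le_mul_right
      calc S.card ≤ ((Finset.range (n + 1)) ×ˢ (Finset.range (n + 1))).card :=
            Finset.card_filter_le _ _
        _ = (n + 1) ^ 2 := by rw [Finset.card_product, Finset.card_range]; ring
    -- real arithmetic
    set e := n - m₀ + m₀ / r with he
    have hcardR : (Nat.card {W : Fin n → Fin q //
          (n : ℝ) * f n < (instSubCount V (List.ofFn W) : ℝ)} : ℝ) ≤
        ((n : ℝ) + 1) ^ (k + 2) * (q : ℝ) ^ (e : ℕ) := by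
      calc (Nat.card {W : Fin n → Fin q //
            (n : ℝ) * f n < (instSubCount V (List.ofFn W) : ℝ)} : ℝ)
          ≤ (((n + 1) ^ 2 * ((n + 1) ^ k * q ^ e) : ℕ) : ℝ) := Nat.cast_le.2 hsum
        _ = ((n : ℝ) + 1) ^ (k + 2) * (q : ℝ) ^ (e : ℕ) := by push_cast; ring
    have hqn : (0 : ℝ) < (q : ℝ) ^ n := by positivity
    have hdiv : (Nat.card {W : Fin n → Fin q //
          (n : ℝ) * f n < (instSubCount V (List.ofFn W) : ℝ)} : ℝ) / (q : ℝ) ^ n ≤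
        ((n : ℝ) + 1) ^ (k + 2) * (q : ℝ) ^ ((e : ℝ) - (n : ℝ)) := by
      rw [Real.rpow_sub hq0, Real.rpow_natCast, Real.rpow_natCast, ← mul_div_assoc]
      gcongr
    -- exponent comparison
    have hexp : (e : ℝ) - (n : ℝ) ≤ f n * (1 - (r : ℝ)) / r := by
      have he1 : (e : ℝ) = (n : ℝ) - (m₀ : ℝ) + ((m₀ / r : ℕ) : ℝ) := by
        rw [he]
        push_cast [Nat.cast_sub hcase]
        ring
      have hdl : ((m₀ / r : ℕ) : ℝ) ≤ (m₀ : ℝ) / (r : ℝ) := Nat.cast_div_le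
      have hr0 : (0 : ℝ) < r := by exact_mod_cast (by omega : 0 < r)
      have hfm : f n ≤ (m₀ : ℝ) := by
        have h := Nat.lt_floor_add_one (f n)
        rw [hm₀, hF]
        push_cast
        linarith
      have hneg : (1 - (r : ℝ)) / r ≤ 0 := by
        apply div_nonpos_of_nonpos_of_nonneg
        · have : (2 : ℝ) ≤ r := by exact_mod_cast hr
          linarith
        · linarith
      have h1 : (e : ℝ) - (n : ℝ) ≤ (m₀ : ℝ) * (1 - (r : ℝ)) / r := by
        rw [he1]
        have : (m₀ : ℝ) * (1 - (r : ℝ)) / r = (m₀ : ℝ) / r - (m₀ : ℝ) := by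
          field_simp
        rw [this]
        linarith
      refine le_trans h1 ?_
      have h2r : (2 : ℝ) ≤ (r : ℝ) := by exact_mod_cast hr
      have hmul : (m₀ : ℝ) * (1 - (r : ℝ)) ≤ f n * (1 - (r : ℝ)) :=
        mul_le_mul_of_nonpos_right hfm (by linarith)
      exact div_le_div_of_nonneg_right hmul (le_of_lt hr0)
    have hmono : (q : ℝ) ^ ((e : ℝ) - (n : ℝ)) ≤ (q : ℝ) ^ (f n * (1 - (r : ℝ)) / r) :=
      Real.rpow_le_rpow_of_exponent_le hq1 hexp
    have hpoly : ((n : ℝ) + 1) ^ (k + 2) < (n : ℝ) ^ (k + 3) := by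
      have hnat : (n + 1) ^ (k + 2) < n ^ (k + 3) := by
        calc (n + 1) ^ (k + 2) ≤ (2 * n) ^ (k + 2) := Nat.pow_le_pow_left (by omega) _
          _ = 2 ^ (k + 2) * n ^ (k + 2) := by rw [Nat.mul_pow]
          _ < n * n ^ (k + 2) := by
              exact Nat.mul_lt_mul_of_lt_of_le (by omega) le_rfl (by positivity)
          _ = n ^ (k + 3) := by ring
      calc ((n : ℝ) + 1) ^ (k + 2) = (((n + 1) ^ (k + 2) : ℕ) : ℝ) := by push_cast; ring
        _ < ((n ^ (k + 3) : ℕ) : ℝ) := by exact_mod_cast hnat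
        _ = (n : ℝ) ^ (k + 3) := by push_cast; ring
    calc (Nat.card {W : Fin n → Fin q //
          (n : ℝ) * f n < (instSubCount V (List.ofFn W) : ℝ)} : ℝ) / (q : ℝ) ^ n
        ≤ ((n : ℝ) + 1) ^ (k + 2) * (q : ℝ) ^ ((e : ℝ) - (n : ℝ)) := hdiv
      _ ≤ ((n : ℝ) + 1) ^ (k + 2) * (q : ℝ) ^ (f n * (1 - (r : ℝ)) / r) := by
          apply mul_le_mul_of_nonneg_left hmono
          positivity
      _ < (n : ℝ) ^ (k + 3) * (q : ℝ) ^ (f n * (1 - (r : ℝ)) / r) :=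
          mul_lt_mul_of_pos_right hpoly hrpow_pos
  · -- event is empty
    have hempty : IsEmpty {W : Fin n → Fin q //
        (n : ℝ) * f n < (instSubCount V (List.ofFn W) : ℝ)} := by
      constructor
      rintro ⟨W, hW⟩
      obtain ⟨p, hp1, hp2, hp3, hp4⟩ := hlong W hW
      have hle : ((p.2 - p.1 : ℕ) : ℝ) ≤ (n : ℝ) := by
        exact_mod_cast (by omega : p.2 - p.1 ≤ n)
      have hnF : (n : ℝ) ≤ (F : ℝ) := by exact_mod_cast (by omega : n ≤ F)
      have hFf : (F : ℝ) ≤ f n := Nat.floor_le (le_of_lt (hfpos n))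
      linarith
    rw [Nat.card_of_isEmpty]
    simpa using hRHS_pos
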